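/- Let T be a multiplicative BiHom-associative trialgebra over a field F, (V, α_V, β_V) a BiHom-module, F = (f_⊣, f_⊢, f_⊥) a 2-cocycle on T with values in V, and B = (b_⊣, b_⊢, b_⊥) the 2-coboundary given by b_∗(x,y) = μ(x∗y) for a linear map μ : T → V with μ∘α = α_V∘μ and μ∘β = β_V∘μ. Then T_{F+B} is a multiplicative BiHom-associative trialgebra, and the map φ : T_F → T_{F+B} defined by φ(x+v) = x + μ(x) + v is an isomorphism of BiHom-associative trialgebras. -/

import Mathlib

/-- The raw data of a BiHom-associative trialgebra over a field `F`:
three bilinear operations `dv` (⊣), `vd` (⊢), `pp` (⊥) and two linear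
structure maps `al` (α), `be` (β). -/
structure BHTData (F : Type*) [Field F] (T : Type*) [AddCommGroup T] [Module F T] where
  dv : T →ₗ[F] T →ₗ[F] T
  vd : T →ₗ[F] T →ₗ[F] T
  pp : T →ₗ[F] T →ₗ[F] T
  al : T →ₗ[F] T
  be : T →ₗ[F] T

variable {F : Type*} [Field F] {T : Type*} [AddCommGroup T] [Module F T]
variable {V : Type*} [AddCommGroup V] [Module F V]
variable {S : Type*} [AddCommGroup S] [Module F S]

/-- The axioms of a BiHom-associative trialgebra. -/
def BHTData.IsBHT (A : BHTData F T) : Prop :=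
  (∀ x, A.al (A.be x) = A.be (A.al x)) ∧
  (∀ x y z, A.dv (A.dv x y) (A.be z) = A.dv (A.al x) (A.dv y z)) ∧
  (∀ x y z, A.dv (A.dv x y) (A.be z) = A.dv (A.al x) (A.vd y z)) ∧
  (∀ x y z, A.dv (A.vd x y) (A.be z) = A.vd (A.al x) (A.dv y z)) ∧
  (∀ x y z, A.vd (A.dv x y) (A.be z) = A.vd (A.al x) (A.vd y z)) ∧
  (∀ x y z, A.vd (A.vd x y) (A.be z) = A.vd (A.al x) (A.vd y z)) ∧
  (∀ x y z, A.dv (A.dv x y) (A.be z) = A.dv (A.al x) (A.pp y z)) ∧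
  (∀ x y z, A.dv (A.pp x y) (A.be z) = A.pp (A.al x) (A.dv y z)) ∧
  (∀ x y z, A.pp (A.dv x y) (A.be z) = A.pp (A.al x) (A.vd y z)) ∧
  (∀ x y z, A.pp (A.vd x y) (A.be z) = A.vd (A.al x) (A.pp y z)) ∧
  (∀ x y z, A.vd (A.pp x y) (A.be z) = A.vd (A.al x) (A.vd y z)) ∧
  (∀ x y z, A.pp (A.pp x y) (A.be z) = A.pp (A.al x) (A.pp y z))

/-- Multiplicativity: the structure maps are homomorphisms for all three products. -/
def BHTData.IsMult (A : BHTData F T) : Prop :=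
  (∀ x y, A.al (A.dv x y) = A.dv (A.al x) (A.al y)) ∧
  (∀ x y, A.al (A.vd x y) = A.vd (A.al x) (A.al y)) ∧
  (∀ x y, A.al (A.pp x y) = A.pp (A.al x) (A.al y)) ∧
  (∀ x y, A.be (A.dv x y) = A.dv (A.be x) (A.be y)) ∧
  (∀ x y, A.be (A.vd x y) = A.vd (A.be x) (A.be y)) ∧
  (∀ x y, A.be (A.pp x y) = A.pp (A.be x) (A.be y))

/-- A 2-cocycle on `A` with values in the BiHom-module `(V, aV, bV)`:
a triple `(fd, fv, fp)` of bilinear maps `T × T → V`. -/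
def IsCocycle (A : BHTData F T) (aV bV : V →ₗ[F] V)
    (fd fv fp : T →ₗ[F] T →ₗ[F] V) : Prop :=
  (∀ x y, fd (A.al x) (A.al y) = aV (fd x y)) ∧
  (∀ x y, fv (A.al x) (A.al y) = aV (fv x y)) ∧
  (∀ x y, fp (A.al x) (A.al y) = aV (fp x y)) ∧
  (∀ x y, fd (A.be x) (A.be y) = bV (fd x y)) ∧
  (∀ x y, fv (A.be x) (A.be y) = bV (fv x y)) ∧
  (∀ x y, fp (A.be x) (A.be y) = bV (fp x y)) ∧
  (∀ x y z, fd (A.dv x y) (A.be z) = fd (A.al x) (A.dv y z)) ∧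
  (∀ x y z, fd (A.dv x y) (A.be z) = fd (A.al x) (A.vd y z)) ∧
  (∀ x y z, fd (A.vd x y) (A.be z) = fv (A.al x) (A.dv y z)) ∧
  (∀ x y z, fv (A.dv x y) (A.be z) = fv (A.al x) (A.vd y z)) ∧
  (∀ x y z, fv (A.vd x y) (A.be z) = fv (A.al x) (A.vd y z)) ∧
  (∀ x y z, fd (A.dv x y) (A.be z) = fd (A.al x) (A.pp y z)) ∧
  (∀ x y z, fd (A.pp x y) (A.be z) = fp (A.al x) (A.dv y z)) ∧
  (∀ x y z, fp (A.dv x y) (A.be z) = fp (A.al x) (A.vd y z)) ∧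
  (∀ x y z, fp (A.vd x y) (A.be z) = fv (A.al x) (A.pp y z)) ∧
  (∀ x y z, fv (A.pp x y) (A.be z) = fv (A.al x) (A.vd y z)) ∧
  (∀ x y z, fp (A.pp x y) (A.be z) = fp (A.al x) (A.pp y z))

/-- A 2-coboundary: the triple of bilinear maps induced by a linear map
`μ : T → V` commuting with the structure maps. -/
def IsCoboundary (A : BHTData F T) (aV bV : V →ₗ[F] V)
    (fd fv fp : T →ₗ[F] T →ₗ[F] V) : Prop :=
  ∃ μ : T →ₗ[F] V,
    (∀ x, μ (A.al x) = aV (μ x)) ∧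
    (∀ x, μ (A.be x) = bV (μ x)) ∧
    (∀ x y, fd x y = μ (A.dv x y)) ∧
    (∀ x y, fv x y = μ (A.vd x y)) ∧
    (∀ x y, fp x y = μ (A.pp x y))

/-- The bilinear operation `(x+u) ∗' (y+v) = x∗y + f(x,y)` on `T ⊕ V`. -/
def extBil (g : T →ₗ[F] T →ₗ[F] T) (f : T →ₗ[F] T →ₗ[F] V) :
    (T × V) →ₗ[F] (T × V) →ₗ[F] (T × V) :=
  LinearMap.mk₂ F (fun p q => (g p.1 q.1, f p.1 q.1))
    (fun p p' q => by simp [Prod.ext_iff])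
    (fun c p q => by simp [Prod.ext_iff])
    (fun p q q' => by simp [Prod.ext_iff])
    (fun c p q => by simp [Prod.ext_iff])

/-- The trialgebra data `T_F` on `T ⊕ V` built from a triple of bilinear maps. -/
def extData (A : BHTData F T) (aV bV : V →ₗ[F] V)
    (fd fv fp : T →ₗ[F] T →ₗ[F] V) : BHTData F (T × V) where
  dv := extBil A.dv fd
  vd := extBil A.vd fv
  pp := extBil A.pp fp
  al := A.al.prodMap aV
  be := A.be.prodMap bV

/-- A homomorphism of BiHom-associative trialgebras. -/
def IsHom (A : BHTData F T) (B : BHTData F S) (φ : T →ₗ[F] S) : Prop :=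
  (∀ x y, φ (A.dv x y) = B.dv (φ x) (φ y)) ∧
  (∀ x y, φ (A.vd x y) = B.vd (φ x) (φ y)) ∧
  (∀ x y, φ (A.pp x y) = B.pp (φ x) (φ y)) ∧
  (∀ x, φ (A.al x) = B.al (φ x)) ∧
  (∀ x, φ (A.be x) = B.be (φ x))

/-- The center of a BiHom-associative trialgebra. -/
def center (A : BHTData F T) : Set T :=
  {z | ∀ t, A.dv z t = 0 ∧ A.dv t z = 0 ∧ A.vd z t = 0 ∧ A.vd t z = 0 ∧
        A.pp z t = 0 ∧ A.pp t z = 0}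

/-- An ideal of a BiHom-associative trialgebra: a subspace closed under the
structure maps and absorbing under all three products. -/
def IsIdeal (A : BHTData F T) (I : Submodule F T) : Prop :=
  (∀ x ∈ I, A.al x ∈ I) ∧ (∀ x ∈ I, A.be x ∈ I) ∧
  (∀ x ∈ I, ∀ y, A.dv x y ∈ I ∧ A.dv y x ∈ I ∧ A.vd x y ∈ I ∧ A.vd y x ∈ I ∧
      A.pp x y ∈ I ∧ A.pp y x ∈ I)

/-- `D` is a generalized αβ-derivation via the pair `(D', D'')`. -/
def IsGenDer (A : BHTData F T) (D D' D'' : T →ₗ[F] T) : Prop :=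
  (∀ x, D (A.al x) = A.al (D x)) ∧ (∀ x, D (A.be x) = A.be (D x)) ∧
  (∀ x, D' (A.al x) = A.al (D' x)) ∧ (∀ x, D' (A.be x) = A.be (D' x)) ∧
  (∀ x, D'' (A.al x) = A.al (D'' x)) ∧ (∀ x, D'' (A.be x) = A.be (D'' x)) ∧
  (∀ a b, D'' (A.dv a b) = A.dv (D a) (A.al (A.be b)) + A.dv (A.al (A.be a)) (D' b)) ∧
  (∀ a b, D'' (A.vd a b) = A.vd (D a) (A.al (A.be b)) + A.vd (A.al (A.be a)) (D' b)) ∧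
  (∀ a b, D'' (A.pp a b) = A.pp (D a) (A.al (A.be b)) + A.pp (A.al (A.be a)) (D' b))

/-- Transport of structure along a bijective linear map `e`:
`x ∗' y = e (e⁻¹ x ∗ e⁻¹ y)`, `α' = e ∘ α ∘ e⁻¹`, `β' = e ∘ β ∘ e⁻¹`. -/
def transport (A : BHTData F T) (e : T ≃ₗ[F] T) : BHTData F T where
  dv := LinearMap.mk₂ F (fun x y => e (A.dv (e.symm x) (e.symm y)))
    (fun x x' y => by simp) (fun c x y => by simp)
    (fun x y y' => by simp) (fun c x y => by simp)
  vd := LinearMap.mk₂ F (fun x y => e (A.vd (e.symm x) (e.symm y)))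
    (fun x x' y => by simp) (fun c x y => by simp)
    (fun x y y' => by simp) (fun c x y => by simp)
  pp := LinearMap.mk₂ F (fun x y => e (A.pp (e.symm x) (e.symm y)))
    (fun x x' y => by simp) (fun c x y => by simp)
    (fun x y y' => by simp) (fun c x y => by simp)
  al := e.toLinearMap ∘ₗ A.al ∘ₗ e.symm.toLinearMap
  be := e.toLinearMap ∘ₗ A.be ∘ₗ e.symm.toLinearMap

/-- Inverse transport of structure along a bijective linear map `e`:
`x ∗₁ y = e⁻¹ (e x ∗₂ e y)`, `α₁ = e⁻¹ ∘ α₂ ∘ e`, `β₁ = e⁻¹ ∘ β₂ ∘ e`. -/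
def transportInv (A : BHTData F T) (e : T ≃ₗ[F] T) : BHTData F T where
  dv := LinearMap.mk₂ F (fun x y => e.symm (A.dv (e x) (e y)))
    (fun x x' y => by simp) (fun c x y => by simp)
    (fun x y y' => by simp) (fun c x y => by simp)
  vd := LinearMap.mk₂ F (fun x y => e.symm (A.vd (e x) (e y)))
    (fun x x' y => by simp) (fun c x y => by simp)
    (fun x y y' => by simp) (fun c x y => by simp)
  pp := LinearMap.mk₂ F (fun x y => e.symm (A.pp (e x) (e y)))
    (fun x x' y => by simp) (fun c x y => by simp)
    (fun x y y' => by simp) (fun c x y => by simp)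
  al := e.symm.toLinearMap ∘ₗ A.al ∘ₗ e.toLinearMap
  be := e.symm.toLinearMap ∘ₗ A.be ∘ₗ e.toLinearMap

/-- for a 2-cocycle `F` and the 2-coboundary `B` induced by `μ`,
`T_{F+B}` is a multiplicative BiHom-associative trialgebra and
`φ(x+v) = x + μ(x) + v` is an isomorphism `T_F → T_{F+B}`. -/
theorem extData_add_coboundary_iso
    (A : BHTData F T) (hA : A.IsBHT) (hM : A.IsMult)
    (aV bV : V →ₗ[F] V) (hV : ∀ v, aV (bV v) = bV (aV v))
    (fd fv fp : T →ₗ[F] T →ₗ[F] V) (hF : IsCocycle A aV bV fd fv fp)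
    (μ : T →ₗ[F] V) (hμa : ∀ x, μ (A.al x) = aV (μ x))
    (hμb : ∀ x, μ (A.be x) = bV (μ x)) :
    (extData A aV bV (fd + A.dv.compr₂ μ) (fv + A.vd.compr₂ μ) (fp + A.pp.compr₂ μ)).IsBHT ∧
    (extData A aV bV (fd + A.dv.compr₂ μ) (fv + A.vd.compr₂ μ) (fp + A.pp.compr₂ μ)).IsMult ∧
    (Function.Bijective
      ⇑((LinearMap.fst F T V).prod (μ ∘ₗ LinearMap.fst F T V + LinearMap.snd F T V)) ∧
     IsHom (extData A aV bV fd fv fp)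
       (extData A aV bV (fd + A.dv.compr₂ μ) (fv + A.vd.compr₂ μ) (fp + A.pp.compr₂ μ))
       ((LinearMap.fst F T V).prod (μ ∘ₗ LinearMap.fst F T V + LinearMap.snd F T V))) := by
  obtain ⟨hc, a1, a2, a3, a4, a5, a6, a7, a8, a9, a10, a11⟩ := hA
  obtain ⟨m1, m2, m3, m4, m5, m6⟩ := hM
  obtain ⟨c1, c2, c3, c4, c5, c6, c7, c8, c9, c10, c11, c12, c13, c14, c15, c16, c17⟩ := hF
  refine ⟨⟨?_,?_,?_,?_,?_,?_,?_,?_,?_,?_,?_,?_⟩, ⟨?_,?_,?_,?_,?_,?_⟩, ⟨?_, ?_,?_,?_,?_,?_⟩⟩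
  · intro x
    simp [extData, Prod.ext_iff, hc, hV]
  · intro x y z
    simp [extData, extBil, Prod.ext_iff, a1, c7]
  · intro x y z
    have h := (a1 x.1 y.1 z.1).symm.trans (a2 x.1 y.1 z.1)
    have h2 := (c7 x.1 y.1 z.1).symm.trans (c8 x.1 y.1 z.1)
    simp [extData, extBil, Prod.ext_iff, a1 x.1 y.1 z.1, c7 x.1 y.1 z.1, h, h2, congrArg μ h]
  · intro x y z
    simp [extData, extBil, Prod.ext_iff, a3 x.1 y.1 z.1, c9 x.1 y.1 z.1]
  · intro x y z
    simp [extData, extBil, Prod.ext_iff, a4 x.1 y.1 z.1, c10 x.1 y.1 z.1]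
  · intro x y z
    simp [extData, extBil, Prod.ext_iff, a5 x.1 y.1 z.1, c11 x.1 y.1 z.1]
  · intro x y z
    have h := (a1 x.1 y.1 z.1).symm.trans (a6 x.1 y.1 z.1)
    have h2 := (c7 x.1 y.1 z.1).symm.trans (c12 x.1 y.1 z.1)
    simp [extData, extBil, Prod.ext_iff, a1 x.1 y.1 z.1, c7 x.1 y.1 z.1, h, h2, congrArg μ h]
  · intro x y z
    simp [extData, extBil, Prod.ext_iff, a7 x.1 y.1 z.1, c13 x.1 y.1 z.1]
  · intro x y z
    simp [extData, extBil, Prod.ext_iff, a8 x.1 y.1 z.1, c14 x.1 y.1 z.1]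
  · intro x y z
    simp [extData, extBil, Prod.ext_iff, a9 x.1 y.1 z.1, c15 x.1 y.1 z.1]
  · intro x y z
    simp [extData, extBil, Prod.ext_iff, a10 x.1 y.1 z.1, c16 x.1 y.1 z.1]
  · intro x y z
    simp [extData, extBil, Prod.ext_iff, a11 x.1 y.1 z.1, c17 x.1 y.1 z.1]
  · intro x y
    have h := (hμa ((A.dv x.1) y.1)).symm.trans (congrArg μ (m1 x.1 y.1))
    simp [extData, extBil, Prod.ext_iff, m1 x.1 y.1, c1 x.1 y.1, h]
  · intro x y
    have h := (hμa ((A.vd x.1) y.1)).symm.trans (congrArg μ (m2 x.1 y.1))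
    simp [extData, extBil, Prod.ext_iff, m2 x.1 y.1, c2 x.1 y.1, h]
  · intro x y
    have h := (hμa ((A.pp x.1) y.1)).symm.trans (congrArg μ (m3 x.1 y.1))
    simp [extData, extBil, Prod.ext_iff, m3 x.1 y.1, c3 x.1 y.1, h]
  · intro x y
    have h := (hμb ((A.dv x.1) y.1)).symm.trans (congrArg μ (m4 x.1 y.1))
    simp [extData, extBil, Prod.ext_iff, m4 x.1 y.1, c4 x.1 y.1, h]
  · intro x y
    have h := (hμb ((A.vd x.1) y.1)).symm.trans (congrArg μ (m5 x.1 y.1))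
    simp [extData, extBil, Prod.ext_iff, m5 x.1 y.1, c5 x.1 y.1, h]
  · intro x y
    have h := (hμb ((A.pp x.1) y.1)).symm.trans (congrArg μ (m6 x.1 y.1))
    simp [extData, extBil, Prod.ext_iff, m6 x.1 y.1, c6 x.1 y.1, h]
  · constructor
    · intro p q h
      simp only [LinearMap.prod_apply, Function.prod, Prod.mk.injEq, LinearMap.add_apply,
        LinearMap.coe_comp, Function.comp_apply, LinearMap.fst_apply, LinearMap.snd_apply] at h
      obtain ⟨h1, h2⟩ := h
      rw [h1] at h2
      exact Prod.ext h1 (by linear_combination (norm := abel) h2)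
    · intro p
      exact ⟨(p.1, p.2 - μ p.1), by simp⟩
  · intro x y
    simp [extData, extBil, Prod.ext_iff]
    abel
  · intro x y
    simp [extData, extBil, Prod.ext_iff]
    abel
  · intro x y
    simp [extData, extBil, Prod.ext_iff]
    abel
  · intro x
    simp [extData, Prod.ext_iff, hμa]
  · intro x
    simp [extData, Prod.ext_iff, hμb]
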